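/- For all integers s, t ≥ 1 with n = s + t + 4, the largest eigenvalue of the n×n matrix A(K_n,H_1(s,t)^−) equals the largest eigenvalue of the 6×6 matrix Q_3(s,t). -/

import Mathlib

open Matrix

/-- The signed-complete-graph matrix `A(K_n, H^-)`: zero diagonal, `-1` on edges of `H`
(vertices labelled `1, …, n`, index `i : Fin n` corresponds to label `i+1`), `+1` otherwise. -/
noncomputable def signMat (n : ℕ) (E : ℕ → ℕ → Prop) : Matrix (Fin n) (Fin n) ℝ :=
  open scoped Classical in
  Matrix.of fun i j => if i = j then 0 else if E ((i : ℕ) + 1) ((j : ℕ) + 1) then -1 else 1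

/-- The largest eigenvalue of a real matrix (the supremum of its spectrum). -/
noncomputable def lam1 {n : ℕ} (M : Matrix (Fin n) (Fin n) ℝ) : ℝ :=
  sSup (spectrum ℝ M)

/-- `{i, j} = {a, b}` as an (unordered) edge. -/
def adjPair (a b i j : ℕ) : Prop := (i = a ∧ j = b) ∨ (i = b ∧ j = a)

/-- `U₁`: triangle `1 2 3` together with the pendant edges `{1, i}` for `4 ≤ i ≤ n`;
i.e. vertex `1` is adjacent to every other vertex, plus the edge `{2,3}`. -/
def U1edge (i j : ℕ) : Prop :=
  (i = 1 ∧ 2 ≤ j) ∨ (j = 1 ∧ 2 ≤ i) ∨ adjPair 2 3 i j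

/-- `D_{1,n-3}`: edges `{1,2}`, `{2,3}` and `{3,i}` for `4 ≤ i ≤ n`. -/
def Dedge (i j : ℕ) : Prop :=
  adjPair 1 2 i j ∨ adjPair 2 3 i j ∨ (i = 3 ∧ 4 ≤ j) ∨ (j = 3 ∧ 4 ≤ i)

/-- `U₂`: triangles `1 2 3` and `1 4 5` sharing vertex `1`, plus pendant edges `{1,i}`
for `6 ≤ i ≤ n`; i.e. vertex `1` adjacent to all, plus edges `{2,3}` and `{4,5}`. -/
def U2edge (i j : ℕ) : Prop :=
  (i = 1 ∧ 2 ≤ j) ∨ (j = 1 ∧ 2 ≤ i) ∨ adjPair 2 3 i j ∨ adjPair 4 5 i j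

/-- `H₁(s,t)` on `n = s + t + 4` vertices: triangle `1 2 3`, `s` pendant vertices
`5, …, s+4` at vertex `1`, vertex `4` adjacent to `1`, and `t` pendant vertices
`s+5, …, s+t+4` at vertex `4`. -/
def H1edge (s t : ℕ) (i j : ℕ) : Prop :=
  adjPair 1 2 i j ∨ adjPair 1 3 i j ∨ adjPair 2 3 i j ∨ adjPair 1 4 i j ∨
  (i = 1 ∧ 5 ≤ j ∧ j ≤ s + 4) ∨ (j = 1 ∧ 5 ≤ i ∧ i ≤ s + 4) ∨
  (i = 4 ∧ s + 5 ≤ j ∧ j ≤ s + t + 4) ∨ (j = 4 ∧ s + 5 ≤ i ∧ i ≤ s + t + 4)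

/-- `H₂(s,t)` on `n = s + t + 5` vertices: triangle `1 2 3`, edges `{1,4}` and `{4,5}`,
`s` pendant vertices `6, …, s+5` at vertex `4`, and `t` pendant vertices
`s+6, …, s+t+5` at vertex `5`. -/
def H2edge (s t : ℕ) (i j : ℕ) : Prop :=
  adjPair 1 2 i j ∨ adjPair 1 3 i j ∨ adjPair 2 3 i j ∨ adjPair 1 4 i j ∨ adjPair 4 5 i j ∨
  (i = 4 ∧ 6 ≤ j ∧ j ≤ s + 5) ∨ (j = 4 ∧ 6 ≤ i ∧ i ≤ s + 5) ∨
  (i = 5 ∧ s + 6 ≤ j ∧ j ≤ s + t + 5) ∨ (j = 5 ∧ s + 6 ≤ i ∧ i ≤ s + t + 5)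

/-- `K_{1,s} ∪ t·P₂` on `n = s + 1 + 2t` vertices: star with center `1` and leaves
`2, …, s+1`, together with the `t` disjoint edges `{s+2k+2, s+2k+3}`, `0 ≤ k < t`. -/
def starMatchEdge (s t : ℕ) (i j : ℕ) : Prop :=
  (i = 1 ∧ 2 ≤ j ∧ j ≤ s + 1) ∨ (j = 1 ∧ 2 ≤ i ∧ i ≤ s + 1) ∨
  (∃ k, k < t ∧ adjPair (s + 2 * k + 2) (s + 2 * k + 3) i j)

/-- The quotient matrix `Q₃(s,t)`. -/
noncomputable def Q3 (s t : ℕ) : Matrix (Fin 6) (Fin 6) ℝ :=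
  !![0, -1, -1, -1, -(s : ℝ), (t : ℝ);
     -1, 0, -1, 1, (s : ℝ), (t : ℝ);
     -1, -1, 0, 1, (s : ℝ), (t : ℝ);
     -1, 1, 1, 0, (s : ℝ), -(t : ℝ);
     -1, 1, 1, 1, (s : ℝ) - 1, (t : ℝ);
     1, 1, 1, -1, (s : ℝ), (t : ℝ) - 1]

/-- The quotient matrix `Q₄(s,t)`. -/
noncomputable def Q4 (s t : ℕ) : Matrix (Fin 7) (Fin 7) ℝ :=
  !![0, -1, -1, -1, 1, (s : ℝ), (t : ℝ);
     -1, 0, -1, 1, 1, (s : ℝ), (t : ℝ);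
     -1, -1, 0, 1, 1, (s : ℝ), (t : ℝ);
     -1, 1, 1, 0, -1, -(s : ℝ), (t : ℝ);
     1, 1, 1, -1, 0, (s : ℝ), -(t : ℝ);
     1, 1, 1, -1, 1, (s : ℝ) - 1, (t : ℝ);
     1, 1, 1, 1, -1, (s : ℝ), (t : ℝ) - 1]

/-- for `s, t ≥ 1` and `n = s + t + 4`,
`λ₁(A(K_n,H₁(s,t)⁻)) = λ₁(Q₃(s,t))`. -/
/- ### auxiliary definitions -/

def cl (s v : ℕ) : Fin 6 :=
  if v ≤ 1 then 0 else if v = 2 then 1 else if v = 3 then 2 else if v = 4 then 3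
  else if v ≤ s + 4 then 4 else 5

def cedge (a b : ℕ) : Prop :=
  adjPair 0 1 a b ∨ adjPair 0 2 a b ∨ adjPair 1 2 a b ∨ adjPair 0 3 a b ∨
  adjPair 0 4 a b ∨ adjPair 3 5 a b

noncomputable def F6 : Matrix (Fin 6) (Fin 6) ℝ := fun a b =>
  open scoped Classical in if cedge (a : ℕ) (b : ℕ) then -1 else 1

def sz (s t : ℕ) (k : Fin 6) : ℕ := if k = 4 then s else if k = 5 then t else 1

lemma fv0 : ((0:Fin 6):ℕ) = 0 := rfl
lemma fv1 : ((1:Fin 6):ℕ) = 1 := rfl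
lemma fv2 : ((2:Fin 6):ℕ) = 2 := rfl
lemma fv3 : ((3:Fin 6):ℕ) = 3 := rfl
lemma fv4 : ((4:Fin 6):ℕ) = 4 := rfl
lemma fv5 : ((5:Fin 6):ℕ) = 5 := rfl

lemma F6_diag (a : Fin 6) : F6 a a = 1 := by
  fin_cases a <;> norm_num [F6, cedge, adjPair, fv0, fv1, fv2, fv3, fv4, fv5]

set_option maxHeartbeats 4000000 in
lemma F6_symm (a b : Fin 6) : F6 a b = F6 b a := by
  fin_cases a <;> fin_cases b <;>
    norm_num [F6, cedge, adjPair, fv0, fv1, fv2, fv3, fv4, fv5]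

set_option maxHeartbeats 1000000000 in
lemma signMat_off {s t : ℕ} {i j : Fin (s + t + 4)} (hij : i ≠ j) :
    signMat (s + t + 4) (H1edge s t) i j = F6 (cl s ((i : ℕ) + 1)) (cl s ((j : ℕ) + 1)) := by
  have hi : (i : ℕ) < s + t + 4 := i.isLt
  have hj : (j : ℕ) < s + t + 4 := j.isLt
  have hab : (i : ℕ) ≠ (j : ℕ) := fun h => hij (Fin.ext h)
  simp only [signMat, Matrix.of_apply, if_neg hij]
  by_cases hE : H1edge s t ((i : ℕ) + 1) ((j : ℕ) + 1) <;>
    [rw [if_pos hE]; rw [if_neg hE]] <;>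
  · simp only [H1edge, adjPair] at hE
    unfold cl
    split_ifs <;>
      first
        | (exfalso; omega)
        | norm_num [F6, cedge, adjPair, fv0, fv1, fv2, fv3, fv4, fv5]

set_option maxHeartbeats 2000000 in
lemma Q3_eq (s t : ℕ) (a b : Fin 6) :
    Q3 s t a b = F6 a b * (sz s t b : ℝ) - (if a = b then 1 else 0) := by
  fin_cases a <;> fin_cases b <;>
    norm_num [Q3, F6, cedge, adjPair, sz, Fin.ext_iff, fv0, fv1, fv2, fv3, fv4, fv5] <;>
    try rfl

/- ### class structure -/

lemma cl_one (s : ℕ) : cl s 1 = 0 := by simp [cl]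
lemma cl_two (s : ℕ) : cl s 2 = 1 := by norm_num [cl]
lemma cl_three (s : ℕ) : cl s 3 = 2 := by norm_num [cl]
lemma cl_four (s : ℕ) : cl s 4 = 3 := by norm_num [cl]
lemma cl_mid (s v : ℕ) (h5 : 5 ≤ v) (hle : v ≤ s + 4) : cl s v = 4 := by
  unfold cl; split_ifs <;> first | rfl | (exfalso; omega)
lemma cl_high (s v : ℕ) (h5 : s + 5 ≤ v) : cl s v = 5 := by
  unfold cl; split_ifs <;> first | rfl | (exfalso; omega)

lemma exists_rep (s t : ℕ) (hs : 1 ≤ s) (ht : 1 ≤ t) (k : Fin 6) :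
    ∃ i : Fin (s + t + 4), cl s ((i : ℕ) + 1) = k := by
  fin_cases k
  · exact ⟨⟨0, by omega⟩, cl_one s⟩
  · exact ⟨⟨1, by omega⟩, cl_two s⟩
  · exact ⟨⟨2, by omega⟩, cl_three s⟩
  · exact ⟨⟨3, by omega⟩, cl_four s⟩
  · exact ⟨⟨4, by omega⟩, cl_mid s 5 (le_refl 5) (by omega)⟩
  · exact ⟨⟨s + 4, by omega⟩, cl_high s (s + 5) (by omega)⟩

/-- class sums of a vector -/
noncomputable def Svec (s t : ℕ) (x : Fin (s + t + 4) → ℝ) : Fin 6 → ℝ := fun k =>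
  ∑ j : Fin (s + t + 4), if cl s ((j : ℕ) + 1) = k then x j else 0

lemma sum_ind (s t : ℕ) (k : Fin 6) :
    (∑ j : Fin (s + t + 4), if cl s ((j : ℕ) + 1) = k then (1:ℝ) else 0)
      = (sz s t k : ℝ) := by
  classical
  rw [Fin.sum_univ_eq_sum_range (fun j => if cl s (j + 1) = k then (1:ℝ) else 0) (s + t + 4)]
  rw [Finset.range_eq_Ico]
  rw [← Finset.sum_Ico_consecutive _ (by omega : 0 ≤ 4) (by omega : 4 ≤ s + t + 4)]
  rw [← Finset.sum_Ico_consecutive _ (by omega : 4 ≤ s + 4) (by omega : s + 4 ≤ s + t + 4)]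
  have h1 : (∑ j ∈ Finset.Ico 0 4, if cl s (j + 1) = k then (1:ℝ) else 0)
      = (if (0:Fin 6) = k then (1:ℝ) else 0) + (if (1:Fin 6) = k then (1:ℝ) else 0)
        + (if (2:Fin 6) = k then (1:ℝ) else 0) + (if (3:Fin 6) = k then (1:ℝ) else 0) := by
    rw [show Finset.Ico 0 4 = ({0,1,2,3} : Finset ℕ) from rfl]
    rw [Finset.sum_insert (by decide), Finset.sum_insert (by decide),
      Finset.sum_insert (by decide), Finset.sum_singleton]
    norm_num [cl_one, cl_two, cl_three, cl_four]
    ring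
  have h2 : (∑ j ∈ Finset.Ico 4 (s + 4), if cl s (j + 1) = k then (1:ℝ) else 0)
      = s * (if (4:Fin 6) = k then (1:ℝ) else 0) := by
    have hc : ∀ j ∈ Finset.Ico 4 (s + 4),
        (if cl s (j + 1) = k then (1:ℝ) else 0)
          = (if (4:Fin 6) = k then (1:ℝ) else 0) := by
      intro j hj
      rw [Finset.mem_Ico] at hj
      rw [cl_mid s (j + 1) (by omega) (by omega)]
    rw [Finset.sum_congr rfl hc, Finset.sum_const, Nat.card_Ico]
    have h4 : s + 4 - 4 = s := by omega
    rw [h4, nsmul_eq_mul]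
  have h3 : (∑ j ∈ Finset.Ico (s + 4) (s + t + 4), if cl s (j + 1) = k then (1:ℝ) else 0)
      = t * (if (5:Fin 6) = k then (1:ℝ) else 0) := by
    have hc : ∀ j ∈ Finset.Ico (s + 4) (s + t + 4),
        (if cl s (j + 1) = k then (1:ℝ) else 0)
          = (if (5:Fin 6) = k then (1:ℝ) else 0) := by
      intro j hj
      rw [Finset.mem_Ico] at hj
      rw [cl_high s (j + 1) (by omega)]
    rw [Finset.sum_congr rfl hc, Finset.sum_const, Nat.card_Ico]
    have h4 : s + t + 4 - (s + 4) = t := by omega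
    rw [h4, nsmul_eq_mul]
  rw [h1, h2, h3]
  fin_cases k <;> norm_num [sz, Fin.ext_iff, fv0, fv1, fv2, fv3, fv4, fv5]

lemma Svec_comp (s t : ℕ) (c : Fin 6 → ℝ) :
    Svec s t (fun j => c (cl s ((j : ℕ) + 1))) = fun k => (sz s t k : ℝ) * c k := by
  classical
  funext k
  unfold Svec
  have h : ∀ j : Fin (s + t + 4),
      (if cl s ((j : ℕ) + 1) = k then c (cl s ((j : ℕ) + 1)) else 0)
        = c k * (if cl s ((j : ℕ) + 1) = k then (1:ℝ) else 0) := by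
    intro j; by_cases h : cl s ((j : ℕ) + 1) = k <;> simp [h]
  rw [Finset.sum_congr rfl (fun j _ => h j), ← Finset.mul_sum, sum_ind]
  ring

lemma Svec_smul (s t : ℕ) (μ : ℝ) (x : Fin (s + t + 4) → ℝ) :
    Svec s t (μ • x) = μ • Svec s t x := by
  classical
  funext k
  unfold Svec
  rw [Pi.smul_apply, smul_eq_mul, Finset.mul_sum]
  refine Finset.sum_congr rfl fun j _ => ?_
  by_cases h : cl s ((j : ℕ) + 1) = k <;> simp [h]

/-- the master row computation -/
lemma mulVec_master (s t : ℕ) (x : Fin (s + t + 4) → ℝ) (i : Fin (s + t + 4)) :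
    (signMat (s + t + 4) (H1edge s t)).mulVec x i
      = (∑ k : Fin 6, F6 (cl s ((i : ℕ) + 1)) k * Svec s t x k) - x i := by
  classical
  have hrow : ∀ j : Fin (s + t + 4),
      signMat (s + t + 4) (H1edge s t) i j * x j
        = F6 (cl s ((i : ℕ) + 1)) (cl s ((j : ℕ) + 1)) * x j
          - (if j = i then x j else 0) := by
    intro j
    by_cases hji : j = i
    · subst hji
      have h0 : signMat (s + t + 4) (H1edge s t) j j = 0 := by simp [signMat]
      rw [h0, if_pos rfl, F6_diag]; ring
    · rw [signMat_off (fun h => hji h.symm), if_neg hji]; ring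
  have h1 : (signMat (s + t + 4) (H1edge s t)).mulVec x i
      = ∑ j, signMat (s + t + 4) (H1edge s t) i j * x j := rfl
  rw [h1, Finset.sum_congr rfl (fun j _ => hrow j), Finset.sum_sub_distrib,
    Finset.sum_ite_eq' Finset.univ i x, if_pos (Finset.mem_univ i)]
  congr 1
  calc ∑ j : Fin (s + t + 4), F6 (cl s ((i : ℕ) + 1)) (cl s ((j : ℕ) + 1)) * x j
      = ∑ j : Fin (s + t + 4), ∑ k : Fin 6, (if cl s ((j : ℕ) + 1) = k
          then F6 (cl s ((i : ℕ) + 1)) (cl s ((j : ℕ) + 1)) * x j else 0) := by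
        refine Finset.sum_congr rfl fun j _ => ?_
        rw [Finset.sum_ite_eq Finset.univ (cl s ((j : ℕ) + 1))
          (fun _ => F6 (cl s ((i : ℕ) + 1)) (cl s ((j : ℕ) + 1)) * x j)]
        simp
    _ = ∑ k : Fin 6, ∑ j : Fin (s + t + 4), (if cl s ((j : ℕ) + 1) = k
          then F6 (cl s ((i : ℕ) + 1)) (cl s ((j : ℕ) + 1)) * x j else 0) := Finset.sum_comm
    _ = ∑ k : Fin 6, F6 (cl s ((i : ℕ) + 1)) k * Svec s t x k := by
        refine Finset.sum_congr rfl fun k _ => ?_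
        unfold Svec
        rw [Finset.mul_sum]
        refine Finset.sum_congr rfl fun j _ => ?_
        by_cases h : cl s ((j : ℕ) + 1) = k
        · rw [if_pos h, if_pos h, h]
        · rw [if_neg h, if_neg h, mul_zero]

lemma Svec_mulVec (s t : ℕ) (x : Fin (s + t + 4) → ℝ) :
    Svec s t ((signMat (s + t + 4) (H1edge s t)).mulVec x)
      = fun k => (sz s t k : ℝ) * (∑ m : Fin 6, F6 k m * Svec s t x m) - Svec s t x k := by
  classical
  funext k
  have h : ∀ j : Fin (s + t + 4),
      (if cl s ((j : ℕ) + 1) = k then (signMat (s + t + 4) (H1edge s t)).mulVec x j else 0)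
        = (∑ m : Fin 6, F6 k m * Svec s t x m)
            * (if cl s ((j : ℕ) + 1) = k then (1:ℝ) else 0)
          - (if cl s ((j : ℕ) + 1) = k then x j else 0) := by
    intro j
    by_cases hj : cl s ((j : ℕ) + 1) = k
    · rw [if_pos hj, if_pos hj, if_pos hj, mulVec_master, hj, mul_one]
    · rw [if_neg hj, if_neg hj, if_neg hj, mul_zero, sub_zero]
  show (∑ j : Fin (s + t + 4), if cl s ((j : ℕ) + 1) = k
      then (signMat (s + t + 4) (H1edge s t)).mulVec x j else 0) = _
  rw [Finset.sum_congr rfl (fun j _ => h j), Finset.sum_sub_distrib, ← Finset.mul_sum,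
    sum_ind]
  show _ - Svec s t x k = _
  ring

/- ### spectrum helpers -/

lemma mem_spec_iff {m : ℕ} (M : Matrix (Fin m) (Fin m) ℝ) (μ : ℝ) :
    μ ∈ spectrum ℝ M ↔ ∃ x : Fin m → ℝ, x ≠ 0 ∧ M.mulVec x = μ • x := by
  classical
  rw [spectrum.mem_iff, Matrix.isUnit_iff_isUnit_det, isUnit_iff_ne_zero, not_ne_iff,
    ← Matrix.exists_mulVec_eq_zero_iff]
  have key : ∀ x : Fin m → ℝ,
      (algebraMap ℝ (Matrix (Fin m) (Fin m) ℝ) μ - M).mulVec x = μ • x - M.mulVec x := by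
    intro x
    rw [Matrix.sub_mulVec, Algebra.algebraMap_eq_smul_one, Matrix.smul_mulVec,
      Matrix.one_mulVec]
  constructor
  · rintro ⟨x, hx0, hx⟩
    exact ⟨x, hx0, (sub_eq_zero.mp (by rw [key x] at hx; exact hx)).symm⟩
  · rintro ⟨x, hx0, hx⟩
    exact ⟨x, hx0, by rw [key x, hx, sub_self]⟩

lemma mem_spec_of_vecMul {m : ℕ} (M : Matrix (Fin m) (Fin m) ℝ) (μ : ℝ) (x : Fin m → ℝ)
    (hx : x ≠ 0) (h : Matrix.vecMul x M = μ • x) : μ ∈ spectrum ℝ M := by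
  classical
  rw [spectrum.mem_iff, Matrix.isUnit_iff_isUnit_det, isUnit_iff_ne_zero, not_ne_iff,
    ← Matrix.exists_vecMul_eq_zero_iff]
  refine ⟨x, hx, ?_⟩
  have hsm : x ᵥ* (μ • (1 : Matrix (Fin m) (Fin m) ℝ)) = μ • x := by
    funext k
    simp [Matrix.vecMul, dotProduct, Matrix.one_apply, mul_ite,
      Finset.sum_ite_eq' Finset.univ k, mul_comm]
  rw [Matrix.vecMul_sub, Algebra.algebraMap_eq_smul_one, hsm, h, sub_self]



/- ### Hermitian and trace -/

lemma adj_symm (a b i j : ℕ) : adjPair a b i j ↔ adjPair a b j i := by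
  unfold adjPair; tauto

lemma H1_symm (s t a b : ℕ) : H1edge s t a b ↔ H1edge s t b a := by
  unfold H1edge
  rw [adj_symm 1 2 a b, adj_symm 1 3 a b, adj_symm 2 3 a b, adj_symm 1 4 a b]
  tauto

lemma signMat_herm (s t : ℕ) : (signMat (s + t + 4) (H1edge s t)).IsHermitian := by
  show _ᴴ = _
  ext i j
  rw [Matrix.conjTranspose_apply, star_trivial]
  simp only [signMat, Matrix.of_apply]
  by_cases hij : i = j
  · subst hij; rfl
  · rw [if_neg (fun h => hij h.symm), if_neg hij]
    by_cases hE : H1edge s t ((j : ℕ) + 1) ((i : ℕ) + 1)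
    · rw [if_pos hE, if_pos ((H1_symm s t _ _).mp hE)]
    · rw [if_neg hE, if_neg (fun h => hE ((H1_symm s t _ _).mp h))]

lemma signMat_trace (s t : ℕ) : (signMat (s + t + 4) (H1edge s t)).trace = 0 := by
  simp [Matrix.trace, Matrix.diag, signMat]

lemma exists_nonneg_eig (s t : ℕ) :
    ∃ μ ∈ spectrum ℝ (signMat (s + t + 4) (H1edge s t)), 0 ≤ μ := by
  classical
  set A := signMat (s + t + 4) (H1edge s t) with hA
  have hherm : A.IsHermitian := signMat_herm s t
  haveI : Nonempty (Fin (s + t + 4)) := ⟨⟨0, by omega⟩⟩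
  have htr : A.trace = ∑ i, (hherm.eigenvalues i : ℝ) := by
    conv_lhs => rw [hherm.spectral_theorem]
    rw [Unitary.conjStarAlgAut_apply, Matrix.trace_mul_cycle,
      (Matrix.mem_unitaryGroup_iff').mp (hherm.eigenvectorUnitary).2, one_mul,
      Matrix.trace_diagonal]
    simp
  have hsum : ∑ i, hherm.eigenvalues i = 0 := by
    rw [← htr, signMat_trace]
  by_contra hcon
  push_neg at hcon
  have hneg : ∀ i : Fin (s + t + 4), hherm.eigenvalues i < 0 := by
    intro i
    have := hcon (hherm.eigenvalues i) (hherm.eigenvalues_mem_spectrum_real i)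
    linarith
  have : (∑ i, hherm.eigenvalues i) < ∑ _i : Fin (s + t + 4), (0:ℝ) :=
    Finset.sum_lt_sum_of_nonempty Finset.univ_nonempty (fun i _ => hneg i)
  simp [hsum] at this

/- ### the two spectrum inclusions -/

lemma spec_Q3_subset (s t : ℕ) (hs : 1 ≤ s) (ht : 1 ≤ t) :
    spectrum ℝ (Q3 s t) ⊆ spectrum ℝ (signMat (s + t + 4) (H1edge s t)) := by
  classical
  intro μ hμ
  obtain ⟨v, hv0, hv⟩ := (mem_spec_iff _ _).mp hμ
  set x : Fin (s + t + 4) → ℝ := fun i => v (cl s ((i : ℕ) + 1)) with hxdef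
  have hx0 : x ≠ 0 := by
    obtain ⟨k, hk⟩ := Function.ne_iff.mp hv0
    obtain ⟨i, hi⟩ := exists_rep s t hs ht k
    intro hcon
    apply hk
    have h2 : x i = 0 := by rw [hcon]; rfl
    rw [hxdef] at h2
    simpa [hi] using h2
  refine (mem_spec_iff _ _).mpr ⟨x, hx0, ?_⟩
  funext i
  rw [mulVec_master]
  have hS : Svec s t x = fun k => (sz s t k : ℝ) * v k := Svec_comp s t v
  rw [hS]
  set a := cl s ((i : ℕ) + 1) with hadef
  have hq : ∑ k : Fin 6, Q3 s t a k * v k = μ * v a := by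
    have := congrFun hv a
    simpa [Matrix.mulVec, dotProduct] using this
  have hexp : ∑ k : Fin 6, Q3 s t a k * v k
      = (∑ k : Fin 6, F6 a k * ((sz s t k : ℝ) * v k)) - v a := by
    have hterm : ∀ k : Fin 6, Q3 s t a k * v k
        = F6 a k * ((sz s t k : ℝ) * v k) - (if a = k then v k else 0) := by
      intro k
      rw [Q3_eq]
      by_cases h : a = k <;> simp [h] <;> ring
    rw [Finset.sum_congr rfl (fun k _ => hterm k), Finset.sum_sub_distrib,
      Finset.sum_ite_eq Finset.univ a v, if_pos (Finset.mem_univ a)]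
  have hxi : x i = v a := rfl
  have hmu : (μ • x) i = μ * v a := rfl
  rw [hmu, hxi]
  rw [hexp] at hq
  linarith

lemma spec_A_subset (s t : ℕ) (μ : ℝ)
    (hμ : μ ∈ spectrum ℝ (signMat (s + t + 4) (H1edge s t))) (hne : μ ≠ -1) :
    μ ∈ spectrum ℝ (Q3 s t) := by
  classical
  obtain ⟨x, hx0, hx⟩ := (mem_spec_iff _ _).mp hμ
  set S := Svec s t x with hSdef
  by_cases hS : S = 0
  · exfalso
    have hAx : ∀ i, (signMat (s + t + 4) (H1edge s t)).mulVec x i = -x i := by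
      intro i
      rw [mulVec_master, ← hSdef, hS]
      simp
    obtain ⟨i, hi⟩ := Function.ne_iff.mp hx0
    have h1 : (signMat (s + t + 4) (H1edge s t)).mulVec x i = μ * x i := by
      rw [hx]; rfl
    rw [hAx i] at h1
    have h2 : (μ + 1) * x i = 0 := by linarith
    rcases mul_eq_zero.mp h2 with h3 | h3
    · exact hne (by linarith)
    · exact hi h3
  · apply mem_spec_of_vecMul _ _ S hS
    funext k
    have h1 : Matrix.vecMul S (Q3 s t) k = ∑ a : Fin 6, S a * Q3 s t a k := rfl
    have hterm : ∀ a : Fin 6, S a * Q3 s t a k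
        = (sz s t k : ℝ) * (F6 k a * S a) - (if a = k then S a else 0) := by
      intro a
      rw [Q3_eq, F6_symm a k]
      by_cases h : a = k
      · rw [if_pos h, if_pos h, h]; ring
      · rw [if_neg h, if_neg h]; ring
    have h2 : ∑ a : Fin 6, S a * Q3 s t a k
        = (sz s t k : ℝ) * (∑ a : Fin 6, F6 k a * S a) - S k := by
      rw [Finset.sum_congr rfl (fun a _ => hterm a), Finset.sum_sub_distrib,
        Finset.sum_ite_eq' Finset.univ k S, if_pos (Finset.mem_univ k), ← Finset.mul_sum]
    have h3 : Svec s t ((signMat (s + t + 4) (H1edge s t)).mulVec x) k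
        = (sz s t k : ℝ) * (∑ m : Fin 6, F6 k m * S m) - S k := by
      rw [Svec_mulVec]
    have h4 : Svec s t ((signMat (s + t + 4) (H1edge s t)).mulVec x) k = μ * S k := by
      rw [hx, Svec_smul]; rfl
    rw [h1, h2, ← h3, h4]
    rfl

/- ### main theorem -/

theorem stmt6 (s t n : ℕ) (hs : 1 ≤ s) (ht : 1 ≤ t) (hn : n = s + t + 4) :
    lam1 (signMat n (H1edge s t)) = lam1 (Q3 s t) := by
  subst hn
  have hfinA := Matrix.finite_spectrum (signMat (s + t + 4) (H1edge s t))
  have hfinQ := Matrix.finite_spectrum (Q3 s t)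
  obtain ⟨μ0, hμ0mem, hμ0⟩ := exists_nonneg_eig s t
  have hQA := spec_Q3_subset s t hs ht
  have hμ0Q : μ0 ∈ spectrum ℝ (Q3 s t) :=
    spec_A_subset s t μ0 hμ0mem (by intro h; rw [h] at hμ0; linarith)
  have hneA : (spectrum ℝ (signMat (s + t + 4) (H1edge s t))).Nonempty := ⟨μ0, hμ0mem⟩
  have hneQ : (spectrum ℝ (Q3 s t)).Nonempty := ⟨μ0, hμ0Q⟩
  have hbddA : BddAbove (spectrum ℝ (signMat (s + t + 4) (H1edge s t))) := hfinA.bddAbove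
  have hbddQ : BddAbove (spectrum ℝ (Q3 s t)) := hfinQ.bddAbove
  have hsupA_mem : sSup (spectrum ℝ (signMat (s + t + 4) (H1edge s t)))
      ∈ spectrum ℝ (signMat (s + t + 4) (H1edge s t)) := hneA.csSup_mem hfinA
  have h1 : lam1 (Q3 s t) ≤ lam1 (signMat (s + t + 4) (H1edge s t)) :=
    csSup_le_csSup hbddA hneQ hQA
  have h2 : lam1 (signMat (s + t + 4) (H1edge s t)) ≤ lam1 (Q3 s t) := by
    have hge : μ0 ≤ sSup (spectrum ℝ (signMat (s + t + 4) (H1edge s t))) :=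
      le_csSup hbddA hμ0mem
    have hnem1 : sSup (spectrum ℝ (signMat (s + t + 4) (H1edge s t))) ≠ -1 := by
      intro h; rw [h] at hge; linarith
    have hmem : sSup (spectrum ℝ (signMat (s + t + 4) (H1edge s t))) ∈ spectrum ℝ (Q3 s t) :=
      spec_A_subset s t _ hsupA_mem hnem1
    exact le_csSup hbddQ hmem
  exact le_antisymm h2 h1
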